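/- Let G be a group and suppose FP_L(y_n^{(r-1)}) ⊆ FP_L(y_n^{(r-2)}) ⊆ … ⊆ FP_L(y_n^{(0)}) where each (y_n^{(j)}) is a product subsystem of (y_n^{(j-1)}) for 1 ≤ j ≤ r-1. Then for any elements x₀, …, x_{r-2} with x_j ∈ FP_L(y_n^{(j)}), there exists x ∈ FP_L(y_n^{(r-1)}) such that x·x_j ∈ FP_L(y_n^{(j)}) for all 0 ≤ j ≤ r-2. -/

import Mathlib

/-- The product of `x_n` over `F` with indices taken in decreasing order. -/
def prodDec {G : Type*} [Group G] (F : Finset ℕ) (x : ℕ → G) : G :=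
  ((F.sort (· ≤ ·)).reverse.map x).prod

/-- The left finite product set of a sequence `(x_n)` in `G`. -/
def FPL {G : Type*} [Group G] (x : ℕ → G) : Set G :=
  { g | ∃ F : Finset ℕ, F.Nonempty ∧ g = prodDec F x }

/-- `(y_n)` is a product subsystem of `(x_n)`: there are finite nonempty sets `F(n)` with
`max F(n) < min F(n+1)` and `y_n = ∏_{f ∈ F(n), decreasing} x_f`. -/
def IsProductSubsystem {G : Type*} [Group G] (y x : ℕ → G) : Prop :=
  ∃ F : ℕ → Finset ℕ, (∀ n, (F n).Nonempty) ∧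
    (∀ n, ∀ a ∈ F n, ∀ b ∈ F (n + 1), a < b) ∧
    (∀ n, y n = prodDec (F n) x)

lemma prodDec_singleton {G : Type*} [Group G] (n : ℕ) (x : ℕ → G) :
    prodDec {n} x = x n := by simp [prodDec]

lemma prodDec_union {G : Type*} [Group G] {A B : Finset ℕ}
    (h : ∀ a ∈ A, ∀ b ∈ B, b < a) (x : ℕ → G) :
    prodDec (A ∪ B) x = prodDec A x * prodDec B x := by
  have hsort : (A ∪ B).sort (· ≤ ·) = B.sort (· ≤ ·) ++ A.sort (· ≤ ·) := by
    refine (fun hp h1 h2 => List.Perm.eq_of_pairwise' (r := (· ≤ ·)) h1 h2 hp) ?_ ?_ ?_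
    · apply List.perm_of_nodup_nodup_toFinset_eq
      · exact Finset.sort_nodup _ _
      · refine List.Nodup.append (Finset.sort_nodup _ _) (Finset.sort_nodup _ _) ?_
        intro a ha hb
        rw [Finset.mem_sort] at ha hb
        exact absurd rfl (h a hb a ha).ne
      · simp [Finset.union_comm]
    · exact Finset.pairwise_sort _ _
    · rw [List.pairwise_append]
      refine ⟨Finset.pairwise_sort _ _, Finset.pairwise_sort _ _, ?_⟩
      intro b hb a ha
      rw [Finset.mem_sort] at ha hb
      exact (h a ha b hb).le
  simp [prodDec, hsort]

lemma blocks_lt {F : ℕ → Finset ℕ} (hne : ∀ n, (F n).Nonempty)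
    (h : ∀ n, ∀ a ∈ F n, ∀ b ∈ F (n + 1), a < b) :
    ∀ {m n : ℕ}, m < n → ∀ a ∈ F m, ∀ b ∈ F n, a < b := by
  intro m n hmn
  induction n with
  | zero => omega
  | succ k ih =>
    intro a ha b hb
    rcases Nat.lt_succ_iff_lt_or_eq.mp hmn with hmk | rfl
    · obtain ⟨c, hc⟩ := hne k
      exact (ih hmk a ha c hc).trans (h k c hc b hb)
    · exact h m a ha b hb

lemma blocks_ge {F : ℕ → Finset ℕ} (hne : ∀ n, (F n).Nonempty)
    (h : ∀ n, ∀ a ∈ F n, ∀ b ∈ F (n + 1), a < b) :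
    ∀ n, ∀ a ∈ F n, n ≤ a := by
  intro n
  induction n with
  | zero => exact fun a _ => Nat.zero_le a
  | succ k ih =>
    intro a ha
    obtain ⟨c, hc⟩ := hne k
    exact Nat.succ_le_of_lt (Nat.lt_of_le_of_lt (ih c hc) (h k c hc a ha))

lemma prodDec_biUnion {G : Type*} [Group G] {y x : ℕ → G} {F : ℕ → Finset ℕ}
    (hne : ∀ n, (F n).Nonempty)
    (h : ∀ n, ∀ a ∈ F n, ∀ b ∈ F (n + 1), a < b)
    (hy : ∀ n, y n = prodDec (F n) x) :
    ∀ S : Finset ℕ, S.Nonempty → prodDec S y = prodDec (S.biUnion F) x := by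
  intro S hS
  induction S using Finset.induction_on_max with
  | empty => exact absurd hS (by simp)
  | insert a s hmax ih =>
    rcases s.eq_empty_or_nonempty with rfl | hs
    · simp [prodDec_singleton, hy a]
    · have hins : insert a s = {a} ∪ s := rfl
      have h1 : ∀ p ∈ ({a} : Finset ℕ), ∀ q ∈ s, q < p := by
        intro p hp q hq; rw [Finset.mem_singleton] at hp; subst hp; exact hmax q hq
      have h2 : ∀ p ∈ F a, ∀ q ∈ s.biUnion F, q < p := by
        intro p hp q hq
        rw [Finset.mem_biUnion] at hq
        obtain ⟨b, hb, hq⟩ := hq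
        exact blocks_lt hne h (hmax b hb) q hq p hp
      rw [hins, prodDec_union h1, prodDec_singleton, hy a, ih hs, ← prodDec_union h2]
      congr 1
      rw [← hins, Finset.biUnion_insert]

lemma isProductSubsystem_refl {G : Type*} [Group G] (x : ℕ → G) :
    IsProductSubsystem x x := by
  refine ⟨fun n => {n}, fun n => ⟨n, by simp⟩, ?_, fun n => (prodDec_singleton n x).symm⟩
  intro n a ha b hb
  simp only [Finset.mem_singleton] at ha hb
  omega

lemma isProductSubsystem_trans {G : Type*} [Group G] {z y x : ℕ → G}
    (h1 : IsProductSubsystem z y) (h2 : IsProductSubsystem y x) :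
    IsProductSubsystem z x := by
  obtain ⟨E, hEne, hElt, hEz⟩ := h1
  obtain ⟨F, hFne, hFlt, hFy⟩ := h2
  refine ⟨fun n => (E n).biUnion F, ?_, ?_, ?_⟩
  · intro n
    obtain ⟨c, hc⟩ := hEne n
    obtain ⟨d, hd⟩ := hFne c
    exact ⟨d, Finset.mem_biUnion.mpr ⟨c, hc, hd⟩⟩
  · intro n a ha b hb
    rw [Finset.mem_biUnion] at ha hb
    obtain ⟨s, hs, ha⟩ := ha
    obtain ⟨t, ht, hb⟩ := hb
    exact blocks_lt hFne hFlt (hElt n s hs t ht) a ha b hb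
  · intro n
    rw [hEz n, prodDec_biUnion hFne hFlt hFy (E n) (hEne n)]

/-- Given a chain of product subsystems `y⁽ʳ⁻¹⁾, …, y⁽⁰⁾` and elements `x_j ∈ FP_L(y⁽ʲ⁾)` for
`0 ≤ j ≤ r-2`, there is a single `x ∈ FP_L(y⁽ʳ⁻¹⁾)` with `x·x_j ∈ FP_L(y⁽ʲ⁾)` for all such `j`. -/
theorem stmt8 {G : Type*} [Group G] (r : ℕ) (hr : 1 ≤ r) (y : ℕ → ℕ → G)
    (hsub : ∀ j, 1 ≤ j → j ≤ r - 1 → IsProductSubsystem (y j) (y (j - 1)))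
    (xs : ℕ → G) (hxs : ∀ j, j + 2 ≤ r → xs j ∈ FPL (y j)) :
    ∃ x ∈ FPL (y (r - 1)), ∀ j, j + 2 ≤ r → x * xs j ∈ FPL (y j) := by
  -- chain: y (r-1) is a product subsystem of y j for every j ≤ r-1
  have hchain : ∀ k j, j + k ≤ r - 1 → IsProductSubsystem (y (j + k)) (y j) := by
    intro k
    induction k with
    | zero => exact fun j _ => isProductSubsystem_refl (y j)
    | succ m ih =>
      intro j hj
      have h1 : IsProductSubsystem (y (j + m + 1)) (y (j + m)) := by
        have h := hsub (j + m + 1) (by omega) (by omega)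
        rwa [Nat.add_sub_cancel] at h
      exact isProductSubsystem_trans h1 (ih j (by omega))
  -- extract the representing finsets of xs j
  have hS : ∀ j, ∃ S : Finset ℕ, j + 2 ≤ r → S.Nonempty ∧ xs j = prodDec S (y j) := by
    intro j
    by_cases hj : j + 2 ≤ r
    · obtain ⟨S, hS1, hS2⟩ := hxs j hj
      exact ⟨S, fun _ => ⟨hS1, hS2⟩⟩
    · exact ⟨∅, fun h => absurd h hj⟩
  choose S hSspec using hS
  set N : ℕ := (Finset.range r).sup (fun j => (S j).sup id) + 1 with hN
  refine ⟨y (r - 1) N, ⟨{N}, ⟨N, by simp⟩, (prodDec_singleton N _).symm⟩, ?_⟩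
  intro j hj
  obtain ⟨F, hFne, hFlt, hFy⟩ := hchain (r - 1 - j) j (by omega)
  have hj' : j + (r - 1 - j) = r - 1 := by omega
  rw [hj'] at hFy
  obtain ⟨hSne, hSx⟩ := hSspec j hj
  have hlt : ∀ a ∈ F N, ∀ b ∈ S j, b < a := by
    intro a ha b hb
    have hNa : N ≤ a := blocks_ge hFne hFlt N a ha
    have hbN : b < N := by
      have h1 : b ≤ (S j).sup id := Finset.le_sup (f := id) hb
      have h2 : (S j).sup id ≤ (Finset.range r).sup (fun j => (S j).sup id) :=
        Finset.le_sup (f := fun j => (S j).sup id) (Finset.mem_range.mpr (by omega))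
      omega
    omega
  refine ⟨F N ∪ S j, Finset.Nonempty.inr hSne, ?_⟩
  rw [prodDec_union hlt, ← hFy N, ← hSx]
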